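/- A linear map φ on g = se(2) × R is a Lie algebra automorphism if and only if in block form φ = [[ε,0,0],[η,P,0],[a,0,t]] with ε = ±1, η ∈ R^2, a ∈ R, t ∈ R\{0}, and P ∈ GL(2,R) with PJ = εJP. -/

import Mathlib

/-- J = [[0,-1],[1,0]] -/
def J : Matrix (Fin 2) (Fin 2) ℝ := !![0, -1; 1, 0]

/-- g = se(2) × ℝ, elements written (s, v, c) ∈ ℝ × ℝ² × ℝ. -/
abbrev gLie := ℝ × (Fin 2 → ℝ) × ℝ

/-- Bracket on g = se(2) × ℝ: [(X,a),(Y,b)] = ([X,Y], 0). -/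
def gBr (x y : gLie) : gLie :=
  (0, x.1 • J.mulVec y.2.1 - y.1 • J.mulVec x.2.1, 0)

lemma J_J (v : Fin 2 → ℝ) : J.mulVec (J.mulVec v) = -v := by
  funext i
  fin_cases i <;>
    simp [J, Matrix.mulVec, dotProduct, Fin.sum_univ_two, Matrix.vecHead, Matrix.vecTail]

lemma J_mul_J : J * J = -1 := by
  ext i j
  fin_cases i <;> fin_cases j <;>
    simp [J, Matrix.mul_apply, Fin.sum_univ_two]

lemma J_ker {v : Fin 2 → ℝ} (h : J.mulVec v = 0) : v = 0 := by
  have := J_J v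
  rw [h] at this
  simpa [Matrix.mulVec_zero, eq_comm, neg_eq_zero] using this

lemma decomp (s : ℝ) (v : Fin 2 → ℝ) (c : ℝ) :
    ((s, v, c) : gLie) = s • ((1, 0, 0) : gLie) + ((0 : ℝ), v, (0 : ℝ))
      + c • ((0, 0, 1) : gLie) := by
  simp [Prod.ext_iff]

/-- A linear bijection φ of g = se(2) × ℝ is a Lie algebra automorphism iff,
in 1+2+1 block form, φ = [[ε,0,0],[η,P,0],[a,0,t]] with ε = ±1, η ∈ ℝ²,
a ∈ ℝ, t ≠ 0 and P ∈ GL(2,ℝ) with PJ = εJP. -/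
theorem stmt9 (φ : gLie ≃ₗ[ℝ] gLie) :
    (∀ x y, φ (gBr x y) = gBr (φ x) (φ y)) ↔
    ∃ (ε : ℝ) (η : Fin 2 → ℝ) (P : Matrix (Fin 2) (Fin 2) ℝ) (a t : ℝ),
      (ε = 1 ∨ ε = -1) ∧ IsUnit P ∧ t ≠ 0 ∧ P * J = ε • (J * P) ∧
      ∀ (s : ℝ) (v : Fin 2 → ℝ) (c : ℝ),
        φ (s, v, c) = (ε * s, s • η + P.mulVec v, a * s + t * c) := by
  constructor
  · intro h
    -- the linear map v ↦ (φ (0,v,0)).2.1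
    set Pmap : (Fin 2 → ℝ) →ₗ[ℝ] (Fin 2 → ℝ) :=
      { toFun := fun v => (φ ((0 : ℝ), v, (0 : ℝ))).2.1
        map_add' := by
          intro v w
          have e : ((0 : ℝ), v + w, (0 : ℝ)) =
              ((0 : ℝ), v, (0 : ℝ)) + ((0 : ℝ), w, (0 : ℝ)) := by
            simp [Prod.ext_iff]
          show (φ ((0 : ℝ), v + w, (0 : ℝ))).2.1 =
            (φ ((0 : ℝ), v, (0 : ℝ))).2.1 + (φ ((0 : ℝ), w, (0 : ℝ))).2.1
          rw [e, map_add]; rfl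
        map_smul' := by
          intro r v
          have e : ((0 : ℝ), r • v, (0 : ℝ)) = r • ((0 : ℝ), v, (0 : ℝ)) := by
            simp [Prod.ext_iff]
          show (φ ((0 : ℝ), r • v, (0 : ℝ))).2.1 = r • (φ ((0 : ℝ), v, (0 : ℝ))).2.1
          rw [e, map_smul]; rfl } with hPmap
    set ε : ℝ := (φ ((1 : ℝ), (0 : Fin 2 → ℝ), (0 : ℝ))).1 with hε
    set η : Fin 2 → ℝ := (φ ((1 : ℝ), (0 : Fin 2 → ℝ), (0 : ℝ))).2.1 with hη
    set a : ℝ := (φ ((1 : ℝ), (0 : Fin 2 → ℝ), (0 : ℝ))).2.2 with ha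
    set t : ℝ := (φ ((0 : ℝ), (0 : Fin 2 → ℝ), (1 : ℝ))).2.2 with ht
    -- φ maps (0,v,0) into {0}×ℝ²×{0}
    have hv : ∀ v : Fin 2 → ℝ,
        φ ((0 : ℝ), v, (0 : ℝ)) = ((0 : ℝ), Pmap v, (0 : ℝ)) := by
      intro v
      have e : ((0 : ℝ), v, (0 : ℝ)) =
          gBr ((1 : ℝ), (0 : Fin 2 → ℝ), (0 : ℝ))
              ((0 : ℝ), -(J.mulVec v), (0 : ℝ)) := by
        simp [gBr, Prod.ext_iff, Matrix.mulVec_neg, J_J, J_mul_J,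
          Matrix.neg_mulVec, Matrix.one_mulVec, -Matrix.mulVec_fin_two]
      have := h ((1 : ℝ), (0 : Fin 2 → ℝ), (0 : ℝ))
        ((0 : ℝ), -(J.mulVec v), (0 : ℝ))
      rw [← e] at this
      refine Prod.ext ?_ (Prod.ext rfl ?_)
      · rw [this]; rfl
      · rw [this]; rfl
    -- φ (0,0,1) is central
    have hz : ∀ y : gLie, gBr (φ ((0 : ℝ), (0 : Fin 2 → ℝ), (1 : ℝ))) y = 0 := by
      intro y
      have hb := h ((0 : ℝ), (0 : Fin 2 → ℝ), (1 : ℝ)) (φ.symm y)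
      have h0 : gBr ((0 : ℝ), (0 : Fin 2 → ℝ), (1 : ℝ)) (φ.symm y) = 0 := by
        simp [gBr, Prod.ext_iff]
      rw [h0, map_zero, φ.apply_symm_apply] at hb
      exact hb.symm
    have hz1 : (φ ((0 : ℝ), (0 : Fin 2 → ℝ), (1 : ℝ))).1 = 0 := by
      have := congrArg (fun z : gLie => z.2.1 0) (hz ((0 : ℝ), ![0, 1], (0 : ℝ)))
      simpa [gBr, J, Matrix.mulVec, dotProduct, Fin.sum_univ_two] using this
    have hz2 : (φ ((0 : ℝ), (0 : Fin 2 → ℝ), (1 : ℝ))).2.1 = 0 := by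
      have := congrArg (fun z : gLie => z.2.1) (hz ((1 : ℝ), (0 : Fin 2 → ℝ), (0 : ℝ)))
      simp [gBr, -Matrix.mulVec_fin_two] at this
      exact J_ker this
    have hzfull : φ ((0 : ℝ), (0 : Fin 2 → ℝ), (1 : ℝ)) = ((0 : ℝ), 0, t) :=
      Prod.ext hz1 (Prod.ext hz2 rfl)
    -- the key commutation relation on the level of maps
    have hPJv : ∀ v : Fin 2 → ℝ,
        Pmap (J.mulVec v) = ε • J.mulVec (Pmap v) := by
      intro v
      have e : ((0 : ℝ), J.mulVec v, (0 : ℝ)) =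
          gBr ((1 : ℝ), (0 : Fin 2 → ℝ), (0 : ℝ)) ((0 : ℝ), v, (0 : ℝ)) := by
        simp [gBr, Prod.ext_iff]
      have hb := h ((1 : ℝ), (0 : Fin 2 → ℝ), (0 : ℝ)) ((0 : ℝ), v, (0 : ℝ))
      rw [← e, hv, hv] at hb
      have := congrArg (fun z : gLie => z.2.1) hb
      simpa [gBr] using this
    set P : Matrix (Fin 2) (Fin 2) ℝ := LinearMap.toMatrix' Pmap with hPdef
    have hPv : ∀ v : Fin 2 → ℝ, P.mulVec v = Pmap v := by
      intro v
      rw [← Matrix.toLin'_apply, hPdef, Matrix.toLin'_toMatrix']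
    -- matrix commutation
    have hmat : P * J = ε • (J * P) := by
      apply Matrix.toLin'.injective
      apply LinearMap.ext
      intro v
      simp only [Matrix.toLin'_apply]
      rw [← Matrix.mulVec_mulVec, hPv, hPJv, Matrix.smul_mulVec,
        ← Matrix.mulVec_mulVec, hPv]
    -- P is a unit
    have hPmapinj : Function.Injective Pmap := by
      rw [← LinearMap.ker_eq_bot, LinearMap.ker_eq_bot']
      intro v hv0
      have : φ ((0 : ℝ), v, (0 : ℝ)) = 0 := by rw [hv v, hv0]; rfl
      have h0 : ((0 : ℝ), v, (0 : ℝ)) = (0 : gLie) := by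
        apply φ.injective; rw [this, map_zero]
      exact congrArg (fun z : gLie => z.2.1) h0
    have hdetP : P.det ≠ 0 := by
      intro h0
      obtain ⟨u, hu, hu0⟩ := (Matrix.exists_mulVec_eq_zero_iff).mpr h0
      apply hu
      apply hPmapinj
      rw [← hPv, hu0, map_zero]
    have hPunit : IsUnit P :=
      (Matrix.isUnit_iff_isUnit_det P).mpr (isUnit_iff_ne_zero.mpr hdetP)
    -- ε = ±1
    have hdetJ : J.det = 1 := by
      simp [J, Matrix.det_fin_two_of]
    have hε1 : ε = 1 ∨ ε = -1 := by
      have hdet := congrArg Matrix.det hmat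
      rw [Matrix.det_mul, Matrix.det_smul, Matrix.det_mul, hdetJ] at hdet
      simp only [Fintype.card_fin, smul_eq_mul, mul_one, one_mul] at hdet
      have h' : ε ^ 2 * P.det = 1 * P.det := by linarith [hdet]
      have hε2 : ε ^ 2 = 1 := mul_right_cancel₀ hdetP h'
      have h2 : (ε - 1) * (ε + 1) = 0 := by linear_combination hε2
      rcases mul_eq_zero.mp h2 with h' | h'
      · left; linarith
      · right; linarith
    -- t ≠ 0
    have htne : t ≠ 0 := by
      intro h0
      have : φ ((0 : ℝ), (0 : Fin 2 → ℝ), (1 : ℝ)) = 0 := by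
        rw [hzfull, h0]; rfl
      have h1 : ((0 : ℝ), (0 : Fin 2 → ℝ), (1 : ℝ)) = (0 : gLie) := by
        apply φ.injective; rw [this, map_zero]
      have := congrArg (fun z : gLie => z.2.2) h1
      simp at this
    refine ⟨ε, η, P, a, t, hε1, hPunit, htne, hmat, ?_⟩
    intro s v c
    have hone : φ ((1 : ℝ), (0 : Fin 2 → ℝ), (0 : ℝ)) = (ε, η, a) := by
      exact Prod.ext rfl (Prod.ext rfl rfl)
    rw [decomp s v c, map_add, map_add, map_smul, map_smul, hone, hv v, hzfull]
    refine Prod.ext ?_ (Prod.ext ?_ ?_)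
    · show s • ε + 0 + c • (0 : ℝ) = ε * s
      simp [mul_comm]
    · show s • η + Pmap v + c • (0 : Fin 2 → ℝ) = s • η + P.mulVec v
      rw [hPv]; simp
    · show s • a + 0 + c • t = a * s + t * c
      simp [mul_comm]
  · rintro ⟨ε, η, P, a, t, hε, hP, ht, hPJ, hform⟩
    have hcomm : ∀ u : Fin 2 → ℝ,
        P.mulVec (J.mulVec u) = ε • J.mulVec (P.mulVec u) := by
      intro u
      rw [Matrix.mulVec_mulVec, hPJ, Matrix.smul_mulVec,
        ← Matrix.mulVec_mulVec]
    rintro ⟨s1, v1, c1⟩ ⟨s2, v2, c2⟩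
    show φ ((0 : ℝ), s1 • J.mulVec v2 - s2 • J.mulVec v1, (0 : ℝ)) = _
    rw [hform, hform, hform]
    refine Prod.ext ?_ (Prod.ext ?_ ?_)
    · show ε * 0 = (0 : ℝ)
      ring
    · show (0 : ℝ) • η + P.mulVec (s1 • J.mulVec v2 - s2 • J.mulVec v1) =
        (ε * s1) • J.mulVec (s2 • η + P.mulVec v2)
          - (ε * s2) • J.mulVec (s1 • η + P.mulVec v1)
      rw [zero_smul, zero_add, Matrix.mulVec_sub, Matrix.mulVec_smul,
        Matrix.mulVec_smul, hcomm, hcomm, Matrix.mulVec_add, Matrix.mulVec_add,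
        Matrix.mulVec_smul, Matrix.mulVec_smul]
      module
    · show a * 0 + t * 0 = (0 : ℝ)
      ring
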